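/- Let η ≥ 2 be an integer and let A be a finite subset of ZMod η with 0 ∈ A. Then there exists a natural number κ with 1 ≤ κ ≤ log₂ η + 2 such that Spec_{1−1/576}(A − κA) ⊆ Bohr(A, 1/6), where A − κA = {a₀ − a₁ − ⋯ − a_κ : a₀, a₁, …, a_κ ∈ A} is the difference of A and the κ-fold iterated sumset of A. -/

import Mathlib

open Pointwise

/-- The "fractional part" norm on `ZMod η`: `min(x.val, η − x.val) / η`. -/
noncomputable def zmodNorm {η : ℕ} (x : ZMod η) : ℝ :=
  (↑(min x.val (η - x.val)) : ℝ) / (η : ℝ)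

/-- The `κ`-fold iterated sumset `κA` of a finite subset of `ZMod η`
(with `0A = {0}`). -/
def iterSumset {η : ℕ} (A : Finset (ZMod η)) : ℕ → Finset (ZMod η)
  | 0 => {0}
  | n + 1 => iterSumset A n + A

/-- The normalized Fourier coefficient `Â(j)` of a finite subset of `ZMod η`. -/
noncomputable def zmodFourier {η : ℕ} (A : Finset (ZMod η)) (j : ZMod η) : ℂ :=
  (A.card : ℂ)⁻¹ *
    ∑ a ∈ A, Complex.exp (2 * (Real.pi : ℂ) * Complex.I * ((a * j).val : ℂ) / (η : ℂ))

noncomputable def chr (η : ℕ) (z : ZMod η) : ℂ :=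
  Complex.exp (2 * (Real.pi : ℂ) * Complex.I * (z.val : ℂ) / (η : ℂ))

lemma chr_eq (η : ℕ) (z : ZMod η) :
    chr η z = Complex.exp (((2 * Real.pi * z.val / η : ℝ) : ℂ) * Complex.I) := by
  unfold chr; congr 1; push_cast; ring

lemma chr_abs (η : ℕ) (z : ZMod η) : ‖chr η z‖ = 1 := by
  rw [chr_eq]; exact Complex.norm_exp_ofReal_mul_I _

lemma chr_add (η : ℕ) [NeZero η] (z w : ZMod η) :
    chr η (z + w) = chr η z * chr η w := by
  unfold chr
  rw [← Complex.exp_add]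
  have hη : (η : ℂ) ≠ 0 := by
    exact_mod_cast Nat.cast_ne_zero.mpr (NeZero.ne η)
  have hnat : z.val + w.val = (z + w).val + η * ((z.val + w.val) / η) := by
    rw [ZMod.val_add]
    exact (Nat.mod_add_div _ _).symm
  have hc : ((z + w).val : ℂ) = (z.val : ℂ) + (w.val : ℂ) - (η : ℂ) * (((z.val + w.val) / η : ℕ) : ℂ) := by
    have h2 : ((z.val + w.val : ℕ) : ℂ) = (((z + w).val + η * ((z.val + w.val) / η) : ℕ) : ℂ) := by
      exact congrArg (fun n : ℕ => (n : ℂ)) hnat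
    rw [Nat.cast_add, Nat.cast_add, Nat.cast_mul] at h2
    linear_combination -h2
  rw [hc]
  have key : 2 * (Real.pi : ℂ) * Complex.I * ((z.val : ℂ) + (w.val : ℂ) - (η : ℂ) * (((z.val + w.val) / η : ℕ) : ℂ)) / (η : ℂ)
      = (2 * (Real.pi : ℂ) * Complex.I * (z.val : ℂ) / (η : ℂ) + 2 * (Real.pi : ℂ) * Complex.I * (w.val : ℂ) / (η : ℂ))
        + ((-(((z.val + w.val) / η : ℕ) : ℤ) : ℤ) : ℂ) * (2 * (Real.pi : ℂ) * Complex.I) := by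
    rw [Int.cast_neg, Int.cast_natCast]
    field_simp
    ring
  rw [key, Complex.exp_add, Complex.exp_int_mul_two_pi_mul_I, mul_one]

lemma cos_le_half {v : ℝ} (h1 : 1/6 < v) (h2 : 1/6 < 1 - v) :
    Real.cos (2 * Real.pi * v) ≤ 1/2 := by
  have hpi := Real.pi_gt_three
  rcases le_or_gt v (1/2) with hv | hv
  · have := Real.cos_le_cos_of_nonneg_of_le_pi (x := Real.pi/3) (y := 2*Real.pi*v)
      (by positivity) (by nlinarith) (by nlinarith)
    rwa [Real.cos_pi_div_three] at this
  · have heq : Real.cos (2*Real.pi*v) = Real.cos (2*Real.pi - 2*Real.pi*v) := by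
      rw [Real.cos_two_pi_sub]
    rw [heq]
    have := Real.cos_le_cos_of_nonneg_of_le_pi (x := Real.pi/3) (y := 2*Real.pi - 2*Real.pi*v)
      (by positivity) (by nlinarith) (by nlinarith)
    rwa [Real.cos_pi_div_three] at this

lemma one_add_chr_abs {η : ℕ} [NeZero η] (z : ZMod η) (hz : 1/6 < zmodNorm z) :
    ‖1 + chr η z‖ ≤ Real.sqrt 3 := by
  have hηpos : 0 < (η : ℝ) := by
    have := NeZero.pos η; exact_mod_cast this
  set θ : ℝ := 2 * Real.pi * (z.val / η) with hθ
  have hval : z.val < η := ZMod.val_lt z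
  -- extract the two bounds on v = z.val/η
  have hmin : (1:ℝ)/6 < (min z.val (η - z.val) : ℕ) / η := hz
  have hv1 : 1/6 < (z.val : ℝ)/η := by
    have h1 : (min z.val (η - z.val) : ℕ) ≤ z.val := min_le_left _ _
    have : ((min z.val (η - z.val) : ℕ) : ℝ) ≤ (z.val : ℝ) := by exact_mod_cast h1
    calc (1:ℝ)/6 < (min z.val (η - z.val) : ℕ) / η := hmin
      _ ≤ (z.val : ℝ)/η := by gcongr
  have hv2 : 1/6 < 1 - (z.val : ℝ)/η := by
    have h1 : (min z.val (η - z.val) : ℕ) ≤ η - z.val := min_le_right _ _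
    have h2 : ((η - z.val : ℕ) : ℝ) = (η : ℝ) - z.val := by
      have : z.val ≤ η := le_of_lt hval
      exact Nat.cast_sub this
    have h3 : ((min z.val (η - z.val) : ℕ) : ℝ) ≤ (η : ℝ) - z.val := by
      rw [← h2]; exact_mod_cast h1
    have : (1:ℝ)/6 < ((η : ℝ) - z.val)/η :=
      lt_of_lt_of_le hmin (by gcongr)
    have heq : ((η : ℝ) - z.val)/η = 1 - (z.val : ℝ)/η := by field_simp
    rwa [heq] at this
  have hcos : Real.cos θ ≤ 1/2 := cos_le_half hv1 hv2
  have hchr : chr η z = Complex.exp ((θ : ℂ) * Complex.I) := by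
    rw [chr_eq]; rw [hθ]; push_cast; ring_nf
  have hsq : (‖1 + chr η z‖)^2 = 2 + 2 * Real.cos θ := by
    rw [Complex.sq_norm, hchr, Complex.normSq_apply]
    simp [Complex.exp_ofReal_mul_I_re, Complex.exp_ofReal_mul_I_im]
    nlinarith [Real.sin_sq_add_cos_sq θ]
  have h3 : (‖1 + chr η z‖)^2 ≤ 3 := by rw [hsq]; linarith
  calc ‖1 + chr η z‖ = Real.sqrt ((‖1 + chr η z‖)^2) :=
        (Real.sqrt_sq (norm_nonneg _)).symm
    _ ≤ Real.sqrt 3 := Real.sqrt_le_sqrt h3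

lemma growth {η : ℕ} [NeZero η] (S T : Finset (ZMod η)) (a ξ : ZMod η)
    (hST : S ⊆ T) (hSa : ∀ x ∈ S, x - a ∈ T) (hT : T.Nonempty)
    (hF : ‖zmodFourier T ξ‖ > 1 - 1/576)
    (hn : 1/6 < zmodNorm (a * ξ)) : 2 * S.card ≤ T.card := by
  classical
  set E : ZMod η → ℂ := fun y => chr η (y * ξ) with hE
  set W : ℂ := ∑ y ∈ T, E y with hW
  have hTcard : 0 < (T.card : ℝ) := by exact_mod_cast Finset.card_pos.mpr hT
  have hFW : zmodFourier T ξ = (T.card : ℂ)⁻¹ * W := rfl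
  have habsW : (1 - 1/576) * T.card < ‖W‖ := by
    rw [hFW] at hF
    rw [norm_mul, norm_inv, Complex.norm_natCast] at hF
    rw [gt_iff_lt, lt_inv_mul_iff₀ hTcard] at hF
    linarith [hF]
  set R : ℝ := ‖W‖ with hR
  have hRpos : 0 < R := lt_of_le_of_lt (by positivity) habsW
  set c : ZMod η → ℝ := fun y => (E y * (starRingEnd ℂ) W).re with hc
  have hcle : ∀ y, c y ≤ R := by
    intro y
    calc c y ≤ ‖E y * (starRingEnd ℂ) W‖ := Complex.re_le_norm _
      _ = ‖E y‖ * ‖W‖ := by rw [norm_mul, Complex.norm_conj]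
      _ = R := by rw [hE, chr_abs, one_mul]
  have hsumc : ∑ y ∈ T, c y = R^2 := by
    have : ∑ y ∈ T, c y = ((∑ y ∈ T, E y) * (starRingEnd ℂ) W).re := by
      rw [Finset.sum_mul, Complex.re_sum]
    rw [this, ← hW, Complex.mul_conj, ← Complex.sq_norm, ← hR, Complex.ofReal_re]
  -- pair bound
  have hpair : ∀ x ∈ S, c (x - a) + c x ≤ Real.sqrt 3 * R := by
    intro x hx
    have hEx : E x = E (x - a) * chr η (a * ξ) := by
      rw [hE]
      simp only
      rw [← chr_add]
      congr 1
      ring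
    have : c (x - a) + c x = ((E (x - a) * (1 + chr η (a * ξ))) * (starRingEnd ℂ) W).re := by
      rw [hc]; simp only
      rw [hEx]
      rw [← Complex.add_re]
      congr 1
      ring
    rw [this]
    calc ((E (x - a) * (1 + chr η (a * ξ))) * (starRingEnd ℂ) W).re
        ≤ ‖(E (x - a) * (1 + chr η (a * ξ))) * (starRingEnd ℂ) W‖ := Complex.re_le_norm _
      _ = ‖E (x - a)‖ * ‖1 + chr η (a * ξ)‖ * ‖W‖ := by
          rw [norm_mul, norm_mul, Complex.norm_conj]
      _ = ‖1 + chr η (a * ξ)‖ * R := by rw [hE, chr_abs, one_mul, hR]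
      _ ≤ Real.sqrt 3 * R := by
          apply mul_le_mul_of_nonneg_right (one_add_chr_abs _ hn) (le_of_lt hRpos)
  set d : ZMod η → ℝ := fun y => R - c y with hd
  have hdnonneg : ∀ y, 0 ≤ d y := fun y => sub_nonneg.mpr (hcle y)
  have hsumd : ∑ y ∈ T, d y = T.card * R - R^2 := by
    rw [hd]; simp only [Finset.sum_sub_distrib, Finset.sum_const, nsmul_eq_mul, hsumc]
  have hsumd_lt : ∑ y ∈ T, d y < (1/576) * T.card * R := by
    rw [hsumd]
    have : (1 - 1/576) * T.card * R < R * R := by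
      apply mul_lt_mul_of_pos_right habsW hRpos
    nlinarith
  -- sum of d over S and over S-image
  have hsub1 : ∑ x ∈ S, d x ≤ ∑ y ∈ T, d y :=
    Finset.sum_le_sum_of_subset_of_nonneg hST (fun y _ _ => hdnonneg y)
  have hsub2 : ∑ x ∈ S, d (x - a) ≤ ∑ y ∈ T, d y := by
    have himg : ∑ x ∈ S, d (x - a) = ∑ y ∈ S.image (fun x => x - a), d y := by
      rw [Finset.sum_image]
      intro x _ y _ h
      exact sub_left_injective h
    rw [himg]
    apply Finset.sum_le_sum_of_subset_of_nonneg ?_ (fun y _ _ => hdnonneg y)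
    intro y hy
    obtain ⟨x, hx, rfl⟩ := Finset.mem_image.mp hy
    exact hSa x hx
  have hlower : (2 - Real.sqrt 3) * R * S.card ≤ ∑ x ∈ S, (d (x - a) + d x) := by
    have heq : (2 - Real.sqrt 3) * R * S.card = ∑ _x ∈ S, (2 - Real.sqrt 3) * R := by
      rw [Finset.sum_const, nsmul_eq_mul]; ring
    rw [heq]
    apply Finset.sum_le_sum
    intro x hx
    have := hpair x hx
    rw [hd]; simp only
    linarith
  have hsplit : ∑ x ∈ S, (d (x - a) + d x) = (∑ x ∈ S, d (x - a)) + ∑ x ∈ S, d x :=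
    Finset.sum_add_distrib
  have hkey : (2 - Real.sqrt 3) * R * S.card < 2 * ((1/576) * T.card * R) := by
    calc (2 - Real.sqrt 3) * R * S.card ≤ ∑ x ∈ S, (d (x - a) + d x) := hlower
      _ = (∑ x ∈ S, d (x - a)) + ∑ x ∈ S, d x := hsplit
      _ ≤ (∑ y ∈ T, d y) + ∑ y ∈ T, d y := add_le_add hsub2 hsub1
      _ < 2 * ((1/576) * T.card * R) := by linarith [hsumd_lt]
  have hsqrt3 : Real.sqrt 3 ≤ 1.8 := by
    nlinarith [Real.sq_sqrt (by norm_num : (0:ℝ) ≤ 3), Real.sqrt_nonneg 3]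
  have hcards : (2 - Real.sqrt 3) * (S.card : ℝ) < (1/288) * T.card := by
    have h1 : (2 - Real.sqrt 3) * (S.card : ℝ) * R < (1/288) * T.card * R := by
      nlinarith [hkey]
    exact lt_of_mul_lt_mul_right h1 (le_of_lt hRpos)
  have : (2 * S.card : ℝ) ≤ (T.card : ℝ) := by
    have hS0 : (0:ℝ) ≤ (S.card : ℝ) := Nat.cast_nonneg _
    nlinarith
  exact_mod_cast this

/-- For any finite `A ⊆ ZMod η` with `0 ∈ A` there is
`κ ≤ log₂ η + 2` such that `Spec_{1−1/576}(A − κA) ⊆ Bohr(A, 1/6)`. -/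
theorem stmt_4 (η : ℕ) (hη : 2 ≤ η) (A : Finset (ZMod η)) (h0 : (0 : ZMod η) ∈ A) :
    ∃ κ : ℕ, 1 ≤ κ ∧ (κ : ℝ) ≤ Real.logb 2 η + 2 ∧
      ∀ ξ : ZMod η,
        ‖zmodFourier (A - iterSumset A κ) ξ‖ > 1 - 1 / 576 →
        ∀ a ∈ A, zmodNorm (a * ξ) ≤ 1 / 6 := by
  haveI : NeZero η := ⟨by omega⟩
  set K : ℕ := Nat.log 2 η + 1 with hK
  set S : ℕ → Finset (ZMod η) := fun κ => A - iterSumset A κ with hS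
  have hKbound : (K : ℝ) ≤ Real.logb 2 η + 2 := by
    have h1 : (Nat.log 2 η : ℝ) ≤ Real.logb 2 η := Real.natLog_le_logb η 2
    push_cast [hK]
    linarith
  -- inclusions
  have hinc : ∀ κ, S κ ⊆ S (κ + 1) := by
    intro κ x hx
    rw [hS] at hx ⊢
    simp only [Finset.mem_sub] at hx ⊢
    obtain ⟨p, hp, m, hm, rfl⟩ := hx
    exact ⟨p, hp, m + 0, Finset.add_mem_add hm h0, by ring⟩
  have hinca : ∀ κ (a : ZMod η), a ∈ A → ∀ x ∈ S κ, x - a ∈ S (κ + 1) := by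
    intro κ a ha x hx
    rw [hS] at hx ⊢
    simp only [Finset.mem_sub] at hx ⊢
    obtain ⟨p, hp, m, hm, rfl⟩ := hx
    exact ⟨p, hp, m + a, Finset.add_mem_add hm ha, by ring⟩
  have hne : ∀ κ, (S κ).Nonempty := by
    intro κ
    induction κ with
    | zero =>
      refine ⟨0, ?_⟩
      rw [hS]
      simp only [Finset.mem_sub]
      exact ⟨0, h0, 0, by simp [iterSumset], by ring⟩
    | succ n ih =>
      obtain ⟨x, hx⟩ := ih
      exact ⟨x, hinc n hx⟩
  by_contra hcon
  push_neg at hcon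
  -- every κ in [1, K] is bad
  have hbad : ∀ κ, 1 ≤ κ → κ ≤ K → 2 * (S (κ - 1)).card ≤ (S κ).card := by
    intro κ h1 h2
    have hb : (κ : ℝ) ≤ Real.logb 2 η + 2 := by
      calc (κ : ℝ) ≤ (K : ℝ) := by exact_mod_cast h2
        _ ≤ _ := hKbound
    obtain ⟨ξ, hξ, a, ha, hna⟩ := hcon κ h1 hb
    obtain ⟨κ', rfl⟩ : ∃ κ', κ = κ' + 1 := ⟨κ - 1, by omega⟩
    have hκ' : κ' + 1 - 1 = κ' := by omega
    rw [hκ']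
    exact growth (S κ') (S (κ' + 1)) a ξ (hinc κ') (hinca κ' a ha) (hne _) hξ hna
  -- growth by induction
  have hgrow : ∀ κ, κ ≤ K → 2 ^ κ ≤ (S κ).card := by
    intro κ
    induction κ with
    | zero => intro _; simpa using Finset.card_pos.mpr (hne 0)
    | succ n ih =>
      intro hn1
      have h1 := ih (by omega)
      have h2 := hbad (n + 1) (by omega) hn1
      simp only [Nat.add_sub_cancel] at h2
      calc 2 ^ (n + 1) = 2 * 2 ^ n := by ring
        _ ≤ 2 * (S n).card := by omega
        _ ≤ (S (n + 1)).card := h2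
  have hfin : (S K).card ≤ η := by
    calc (S K).card ≤ Fintype.card (ZMod η) := Finset.card_le_univ _
      _ = η := ZMod.card η
  have hpow : η < 2 ^ K := Nat.lt_pow_succ_log_self (by norm_num) η
  have := hgrow K le_rfl
  omega
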